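/- Let V be a real normed vector space, let v ∈ V with ‖v‖ = 1, and suppose the norm function x ↦ ‖x‖ is Fréchet differentiable at v with derivative φ (a continuous linear functional on V). Then for every w ∈ V with φ(w) = 0 and every s ∈ ℝ, one has ‖s • v + w‖ ≥ |s|. If moreover V is a strictly convex normed space and ‖s • v + w‖ = |s| for some s ≠ 0, then w = 0. -/

import Mathlib

/-- If the norm of a real normed space is Fréchet differentiable at a unit vector `v`
with derivative `φ`, then for every `w` in the kernel of `φ` (the "orthogonal complement"
of `v`) and every `s ∈ ℝ` one has `‖s • v + w‖ ≥ |s|`; if moreover the space is strictly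
convex and equality holds for some `s ≠ 0`, then `w = 0`. -/
theorem norm_add_orthogonal_ge_abs
    {V : Type*} [NormedAddCommGroup V] [NormedSpace ℝ V]
    (v : V) (hv : ‖v‖ = 1) (φ : V →L[ℝ] ℝ)
    (hderiv : HasFDerivAt (fun x : V => ‖x‖) φ v)
    (w : V) (hw : φ w = 0) :
    (∀ s : ℝ, |s| ≤ ‖s • v + w‖) ∧
    (StrictConvexSpace ℝ V → ∀ s : ℝ, s ≠ 0 → ‖s • v + w‖ = |s| → w = 0) := by
  -- ‖φ‖ ≤ 1
  have hφ1 : ‖φ‖ ≤ 1 := by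
    simpa using hderiv.le_of_lipschitz lipschitzWith_one_norm
  -- φ v = 1
  have hg : HasDerivAt (fun t : ℝ => t • v) v 1 := by
    simpa using (hasDerivAt_id (1 : ℝ)).smul_const v
  have hcomp : HasDerivAt (fun t : ℝ => ‖t • v‖) (φ v) 1 := by
    have hd : HasFDerivAt (fun x : V => ‖x‖) φ ((1:ℝ) • v) := by simpa using hderiv
    exact hd.comp_hasDerivAt 1 hg
  have hid : HasDerivAt (fun t : ℝ => ‖t • v‖) 1 1 := by
    refine (hasDerivAt_id (1 : ℝ)).congr_of_eventuallyEq ?_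
    filter_upwards [eventually_gt_nhds (show (0:ℝ) < 1 by norm_num)] with t ht
    simp [norm_smul, hv, Real.norm_eq_abs, abs_of_pos ht]
  have hφv : φ v = 1 := hcomp.unique hid
  have key : ∀ u : V, |φ u| ≤ ‖u‖ := fun u => by
    calc |φ u| = ‖φ u‖ := rfl
    _ ≤ ‖φ‖ * ‖u‖ := φ.le_opNorm u
    _ ≤ 1 * ‖u‖ := by gcongr
    _ = ‖u‖ := one_mul _
  have h1 : ∀ s : ℝ, |s| ≤ ‖s • v + w‖ := fun s => by
    have := key (s • v + w)
    simpa [map_add, map_smul, hφv, hw] using this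
  refine ⟨h1, fun _inst s hs heq => ?_⟩
  -- equality case
  have hsv : ‖s • v‖ = |s| := by rw [norm_smul, hv, Real.norm_eq_abs, mul_one]
  have h2 : |2 * s| ≤ ‖s • v + (s • v + w)‖ := by
    have := key (s • v + (s • v + w))
    simpa [map_add, map_smul, hφv, hw, two_mul] using this
  have hadd : ‖s • v + (s • v + w)‖ = ‖s • v‖ + ‖s • v + w‖ := by
    apply le_antisymm (norm_add_le _ _)
    calc ‖s • v‖ + ‖s • v + w‖ = |2 * s| := by
          rw [hsv, heq, abs_mul]; norm_num; ring
    _ ≤ _ := h2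
  have heqv : s • v = s • v + w := eq_of_norm_eq_of_norm_add_eq (x := s • v)
    (y := s • v + w) (by rw [hsv, heq]) hadd
  exact (add_eq_left.mp heqv.symm)
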